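/- For all real numbers α and d and every natural number N ≥ 1, summing over all set partitions P of {0, …, N−1}: ∑_P (∏_{j=1}^{|P|−1} (α + j·d)) · ∏_{B ∈ P} (∏_{t=0}^{|B|−2} (1 − d + t)) = ∏_{t=0}^{N−2} (α + 1 + t), where |P| is the number of blocks of P and |B| is the cardinality of block B. -/

import Mathlib

open Finset

/-- A `Finpartition` is determined by its parts, so over a fintype there are
finitely many finpartitions. -/
noncomputable instance {α : Type*} [Lattice α] [OrderBot α] [Fintype α] [DecidableEq α]
    (a : α) : Fintype (Finpartition a) :=
  Fintype.ofInjective Finpartition.parts fun P Q h => by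
    cases P; cases Q; simpa using h

namespace PYaux

variable {γ : Type*} [DecidableEq γ] {a : γ} {s : Finset γ}

/-- Extend a partition of `s` by the new singleton block `{a}`. -/
def extN (Q : Finpartition s) (ha : a ∉ s) : Finpartition (insert a s) :=
  Q.extend (b := {a}) (by simp) (Finset.disjoint_singleton_right.2 ha)
    (by rw [sup_comm, sup_eq_union, ← insert_eq])

lemma extN_parts (Q : Finpartition s) (ha : a ∉ s) :
    (extN Q ha).parts = insert {a} Q.parts := rfl

/-- Extend a partition of `s` by adding `a` to the existing block `B`. -/
def extS (Q : Finpartition s) (B : Finset γ) (hB : B ∈ Q.parts) (ha : a ∉ s) :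
    Finpartition (insert a s) where
  parts := insert (insert a B) (Q.parts.erase B)
  supIndep := by
    rw [Finset.supIndep_iff_pairwiseDisjoint, coe_insert]
    refine Set.PairwiseDisjoint.insert
      (Q.disjoint.subset (coe_subset.2 (erase_subset _ _))) fun D hD hne => ?_
    rw [mem_coe, mem_erase] at hD
    rw [id, id, Finset.disjoint_insert_left]
    exact ⟨fun h => ha (Q.le hD.2 h), Q.disjoint hB hD.2 (Ne.symm hD.1)⟩
  sup_parts := by
    have h := Q.sup_parts
    rw [← insert_erase hB, sup_insert] at h
    simp only [sup_insert, id] at h ⊢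
    rw [insert_eq, insert_eq a s, sup_eq_union, union_assoc]
    rw [sup_eq_union] at h
    rw [h]
  bot_notMem := by
    simp only [bot_eq_empty, mem_insert, mem_erase, not_or]
    exact ⟨fun h => (insert_ne_empty a B) h.symm,
      fun h => Q.bot_notMem h.2⟩

lemma extS_parts (Q : Finpartition s) (B : Finset γ) (hB : B ∈ Q.parts) (ha : a ∉ s) :
    (extS Q B hB ha).parts = insert (insert a B) (Q.parts.erase B) := rfl

/-- Restrict a partition of `insert a s` to `s` by deleting `a`. -/
def res (P : Finpartition (insert a s)) (ha : a ∉ s) : Finpartition s :=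
  (P.avoid {a}).copy (by rw [sdiff_singleton_eq_erase, erase_insert ha])

lemma mem_res {P : Finpartition (insert a s)} {ha : a ∉ s} {c : Finset γ} :
    c ∈ (res P ha).parts ↔ ∃ D ∈ P.parts, ¬ D ⊆ {a} ∧ D.erase a = c := by
  simp only [res, Finpartition.copy_parts, Finpartition.mem_avoid, le_eq_subset,
    sdiff_singleton_eq_erase]

lemma res_extN (Q : Finpartition s) (ha : a ∉ s) : res (extN Q ha) ha = Q := by
  refine Finpartition.ext ?_
  ext c
  rw [mem_res]
  constructor
  · rintro ⟨D, hD, hD1, rfl⟩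
    rw [extN_parts, mem_insert] at hD
    rcases hD with rfl | hD
    · exact absurd (subset_refl _) hD1
    · rwa [erase_eq_of_notMem fun h => ha (Q.le hD h)]
  · intro hc
    have hac : a ∉ c := fun h => ha (Q.le hc h)
    refine ⟨c, by rw [extN_parts]; exact mem_insert_of_mem hc, fun h => ?_,
      erase_eq_of_notMem hac⟩
    rcases (Q.nonempty_of_mem_parts hc) with ⟨b, hb⟩
    exact hac (mem_singleton.1 (h hb) ▸ hb)

lemma res_extS (Q : Finpartition s) (B : Finset γ) (hB : B ∈ Q.parts) (ha : a ∉ s) :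
    res (extS Q B hB ha) ha = Q := by
  have haB : a ∉ B := fun h => ha (Q.le hB h)
  refine Finpartition.ext ?_
  ext c
  rw [mem_res]
  constructor
  · rintro ⟨D, hD, hD1, rfl⟩
    rw [extS_parts, mem_insert] at hD
    rcases hD with rfl | hD
    · rwa [erase_insert haB]
    · rw [erase_eq_of_notMem fun h => ha (Q.le (mem_of_mem_erase hD) h)]
      exact mem_of_mem_erase hD
  · intro hc
    have hac : a ∉ c := fun h => ha (Q.le hc h)
    by_cases hcB : c = B
    · subst hcB
      refine ⟨insert a c, by rw [extS_parts]; exact mem_insert_self _ _, fun h => ?_,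
        erase_insert hac⟩
      rcases (Q.nonempty_of_mem_parts hc) with ⟨b, hb⟩
      exact hac (mem_singleton.1 (h (mem_insert_of_mem hb)) ▸ hb)
    · refine ⟨c, by rw [extS_parts]; exact mem_insert_of_mem (mem_erase.2 ⟨hcB, hc⟩),
        fun h => ?_, erase_eq_of_notMem hac⟩
      rcases (Q.nonempty_of_mem_parts hc) with ⟨b, hb⟩
      exact hac (mem_singleton.1 (h hb) ▸ hb)

lemma singleton_mem_extN (Q : Finpartition s) (ha : a ∉ s) :
    {a} ∈ (extN Q ha).parts := by rw [extN_parts]; exact mem_insert_self _ _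

lemma singleton_not_mem_extS (Q : Finpartition s) (B : Finset γ) (hB : B ∈ Q.parts)
    (ha : a ∉ s) : {a} ∉ (extS Q B hB ha).parts := by
  rw [extS_parts, mem_insert]
  rintro (h | h)
  · rcases Q.nonempty_of_mem_parts hB with ⟨b, hb⟩
    have : b ∈ ({a} : Finset γ) := h ▸ mem_insert_of_mem hb
    exact ha ((mem_singleton.1 this) ▸ Q.le hB hb)
  · exact ha (Q.le (mem_of_mem_erase h) (by
      have := mem_erase.1 h
      exact mem_singleton_self a))

end PYaux

namespace PYaux

variable {γ : Type*} [DecidableEq γ] {a : γ} {s : Finset γ}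

lemma singleton_not_mem_parts (Q : Finpartition s) (ha : a ∉ s) : {a} ∉ Q.parts :=
  fun h => ha (Q.le h (mem_singleton_self a))

lemma fiber_eq [Fintype γ] [DecidableEq (Finpartition s)] (ha : a ∉ s) (Q : Finpartition s) :
    (univ.filter fun P : Finpartition (insert a s) => res P ha = Q)
      = insert (extN Q ha) (Q.parts.attach.image fun B => extS Q B.1 B.2 ha) := by
  ext P
  simp only [mem_filter, mem_univ, true_and, mem_insert, mem_image, mem_attach,
    true_and, Subtype.exists]
  constructor
  · intro hQ
    have hamem : a ∈ insert a s := mem_insert_self a s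
    have hTp : P.part a ∈ P.parts := P.part_mem.2 hamem
    have haT : a ∈ P.part a := P.mem_part hamem
    set T := P.part a with hTdef
    by_cases hTa : T = {a}
    · left
      refine (Finpartition.ext ?_).symm
      rw [extN_parts, ← hQ]
      ext c
      simp only [mem_insert, mem_res]
      constructor
      · rintro (rfl | ⟨D, hD, hD1, rfl⟩)
        · exact hTa ▸ hTp
        · have haD : a ∉ D := fun h => hD1 (by
            rw [P.eq_of_mem_parts hD hTp h haT, hTa])
          rwa [erase_eq_of_notMem haD]
      · intro hc
        by_cases hcT : c = T
        · exact Or.inl (hcT.trans hTa)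
        · have hac : a ∉ c := fun h => hcT (P.eq_of_mem_parts hc hTp h haT)
          refine Or.inr ⟨c, hc, fun h => ?_, erase_eq_of_notMem hac⟩
          rcases P.nonempty_of_mem_parts hc with ⟨b, hb⟩
          exact hac (mem_singleton.1 (h hb) ▸ hb)
    · right
      have hTs : ¬ T ⊆ {a} := fun h =>
        hTa ((subset_singleton_iff.1 h).resolve_left (ne_empty_of_mem haT))
      have hB : T.erase a ∈ Q.parts := by rw [← hQ, mem_res]; exact ⟨T, hTp, hTs, rfl⟩
      refine ⟨T.erase a, hB, ?_⟩
      refine Finpartition.ext ?_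
      rw [extS_parts, insert_erase haT, ← hQ]
      have hTnt : T.Nontrivial := (Finset.nontrivial_iff_ne_singleton haT).2 hTa
      ext c
      simp only [mem_insert, mem_erase, mem_res]
      constructor
      · rintro (rfl | ⟨hne, D, hD, hD1, rfl⟩)
        · exact hTp
        · have haD : a ∉ D := fun h => hne (by rw [P.eq_of_mem_parts hD hTp h haT])
          rwa [erase_eq_of_notMem haD]
      · intro hc
        by_cases hcT : c = T
        · exact Or.inl hcT
        · have hac : a ∉ c := fun h => hcT (P.eq_of_mem_parts hc hTp h haT)
          refine Or.inr ⟨fun hce => ?_, c, hc, fun h => ?_, erase_eq_of_notMem hac⟩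
          · obtain ⟨b, hbT, hba⟩ := hTnt.exists_ne a
            have hbc : b ∈ c := by rw [hce]; exact mem_erase.2 ⟨hba, hbT⟩
            exact hcT (P.eq_of_mem_parts hc hTp hbc hbT)
          · rcases P.nonempty_of_mem_parts hc with ⟨b, hb⟩
            exact hac (mem_singleton.1 (h hb) ▸ hb)
  · rintro (rfl | ⟨B, hB, rfl⟩)
    · exact res_extN Q ha
    · exact res_extS Q B hB ha

lemma extN_not_mem_image [Fintype γ] (ha : a ∉ s) (Q : Finpartition s) :
    extN Q ha ∉ Q.parts.attach.image fun B => extS Q B.1 B.2 ha := by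
  intro h
  rcases mem_image.1 h with ⟨B, _, heq⟩
  exact singleton_not_mem_extS Q B.1 B.2 ha (heq ▸ singleton_mem_extN Q ha)

lemma extS_injOn (ha : a ∉ s) (Q : Finpartition s) :
    ∀ B ∈ Q.parts.attach, ∀ C ∈ Q.parts.attach,
      extS Q B.1 B.2 ha = extS Q C.1 C.2 ha → B = C := by
  rintro ⟨B, hB⟩ - ⟨C, hC⟩ - h
  have hp : insert a B ∈ (extS Q C hC ha).parts := by
    rw [← h, extS_parts]; exact mem_insert_self _ _
  rw [extS_parts, mem_insert] at hp
  rcases hp with hp | hp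
  · have haB : a ∉ B := fun hh => ha (Q.le hB hh)
    have haC : a ∉ C := fun hh => ha (Q.le hC hh)
    have : B = C := by
      have := congrArg (fun t => Finset.erase t a) hp
      simpa [erase_insert haB, erase_insert haC] using this
    simp [this]
  · exact absurd (Q.le (mem_of_mem_erase hp) (mem_insert_self a B)) ha

/-- The Pitman-Yor weight of a partition. -/
noncomputable def w (α d : ℝ) {s : Finset γ} (P : Finpartition s) : ℝ :=
  (∏ j ∈ range (P.parts.card - 1), (α + ((j : ℝ) + 1) * d)) *
    ∏ B ∈ P.parts, ∏ t ∈ range (B.card - 1), (1 - d + (t : ℝ))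

lemma w_extN (α d : ℝ) (Q : Finpartition s) (ha : a ∉ s) :
    w α d (extN Q ha) =
      (∏ j ∈ range Q.parts.card, (α + ((j : ℝ) + 1) * d)) *
        ∏ B ∈ Q.parts, ∏ t ∈ range (B.card - 1), (1 - d + (t : ℝ)) := by
  unfold w
  rw [extN_parts, card_insert_of_notMem (singleton_not_mem_parts Q ha),
    Nat.add_sub_cancel, prod_insert (singleton_not_mem_parts Q ha)]
  simp

lemma w_extS (α d : ℝ) (Q : Finpartition s) (B : Finset γ) (hB : B ∈ Q.parts) (ha : a ∉ s) :
    w α d (extS Q B hB ha) = ((B.card : ℝ) - d) * w α d Q := by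
  have haB : a ∉ B := fun h => ha (Q.le hB h)
  have h1 : insert a B ∉ Q.parts.erase B :=
    fun h => ha (Q.le (mem_of_mem_erase h) (mem_insert_self a B))
  have hBpos : 0 < B.card := card_pos.2 (Q.nonempty_of_mem_parts hB)
  have hk : Q.parts.card - 1 + 1 = Q.parts.card :=
    Nat.succ_pred_eq_of_pos (card_pos.2 ⟨B, hB⟩)
  unfold w
  rw [extS_parts, card_insert_of_notMem h1, card_erase_of_mem hB, hk, prod_insert h1,
    card_insert_of_notMem haB, Nat.add_sub_cancel]
  obtain ⟨m, hm⟩ := Nat.exists_eq_add_of_lt hBpos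
  rw [zero_add] at hm
  rw [← mul_prod_erase Q.parts _ hB, hm, Nat.add_sub_cancel, prod_range_succ]
  push_cast
  ring

end PYaux

namespace PYaux

variable {γ : Type*} [DecidableEq γ] {a : γ} {s : Finset γ}

lemma sum_fiber [Fintype γ] (α d : ℝ) (ha : a ∉ s) (hs : s.Nonempty) (Q : Finpartition s) :
    w α d (extN Q ha) + ∑ B ∈ Q.parts.attach, w α d (extS Q B.1 B.2 ha) =
      (α + (s.card : ℝ)) * w α d Q := by
  have hk : Q.parts.card - 1 + 1 = Q.parts.card :=
    Nat.succ_pred_eq_of_pos (card_pos.2 (Q.parts_nonempty (by simpa using hs.ne_empty)))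
  have hkcast : ((Q.parts.card - 1 : ℕ) : ℝ) + 1 = (Q.parts.card : ℝ) := by
    rw [← hk]; push_cast; ring
  have h1 : w α d (extN Q ha) = (α + (Q.parts.card : ℝ) * d) * w α d Q := by
    rw [w_extN]
    conv_lhs => rw [← hk]
    rw [prod_range_succ, hkcast]
    unfold w
    ring
  have h2 : ∑ B ∈ Q.parts.attach, w α d (extS Q B.1 B.2 ha) =
      ((s.card : ℝ) - (Q.parts.card : ℝ) * d) * w α d Q := by
    have : ∀ B ∈ Q.parts.attach, w α d (extS Q B.1 B.2 ha) = ((B.1.card : ℝ) - d) * w α d Q :=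
      fun B _ => w_extS α d Q B.1 B.2 ha
    rw [sum_congr rfl this, ← sum_mul]
    congr 1
    rw [sum_attach Q.parts (fun B => ((B.card : ℝ) - d)), sum_sub_distrib, sum_const,
      ← Nat.cast_sum, Q.sum_card_parts]
    simp [mul_comm]
  rw [h1, h2]
  ring

lemma key [Fintype γ] (α d : ℝ) :
    ∀ s : Finset γ, s.Nonempty →
      ∑ P : Finpartition s, w α d P = ∏ t ∈ range (s.card - 1), (α + 1 + (t : ℝ)) := by
  classical
  intro s
  induction s using Finset.induction_on with
  | empty => intro hs; simp at hs
  | @insert a s ha ih =>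
    intro _
    rcases s.eq_empty_or_nonempty with rfl | hs'
    · show ∑ P : Finpartition ({a} : Finset γ), w α d P =
        ∏ t ∈ range (({a} : Finset γ).card - 1), (α + 1 + (t : ℝ))
      have huniq : ∀ P : Finpartition ({a} : Finset γ), P.parts = {{a}} := by
        intro P
        have h3 : a ∈ P.part a := P.mem_part (mem_singleton_self a)
        have h1 : {a} ∈ P.parts := by
          have hm := P.part_mem.2 (mem_singleton_self a)
          have h2 : P.part a ⊆ {a} := P.le hm
          rwa [(subset_singleton_iff.1 h2).resolve_left (ne_empty_of_mem h3)] at hm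
        refine Subset.antisymm (fun c hc => ?_) (by simpa using h1)
        rw [mem_singleton]
        exact (subset_singleton_iff.1 (P.le hc)).resolve_left
          (nonempty_iff_ne_empty.1 (P.nonempty_of_mem_parts hc))
      haveI : Subsingleton (Finpartition ({a} : Finset γ)) :=
        ⟨fun P R => Finpartition.ext ((huniq P).trans (huniq R).symm)⟩
      rw [Fintype.sum_subsingleton _ (Finpartition.indiscrete
        (by simp : ({a} : Finset γ) ≠ ⊥))]
      simp [w, huniq]
    · have hcard : 1 ≤ s.card := card_pos.2 hs'
      rw [← Finset.sum_fiberwise univ (fun P : Finpartition (insert a s) => res P ha)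
        (w α d)]
      have hfib : ∀ Q : Finpartition s,
          ∑ P ∈ univ.filter (fun P : Finpartition (insert a s) => res P ha = Q), w α d P =
            (α + (s.card : ℝ)) * w α d Q := by
        intro Q
        rw [fiber_eq ha Q, sum_insert (extN_not_mem_image ha Q),
          sum_image (extS_injOn ha Q)]
        exact sum_fiber α d ha hs' Q
      rw [sum_congr rfl fun Q _ => hfib Q, ← mul_sum, ih hs',
        card_insert_of_notMem ha, Nat.add_sub_cancel]
      obtain ⟨m, hm⟩ := Nat.exists_eq_add_of_lt hcard
      rw [zero_add] at hm
      rw [hm, prod_range_succ, Nat.add_sub_cancel]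
      push_cast
      ring

end PYaux

/-- The Pitman-Yor EPPF sums to one: summing over all set partitions `P` of
`{0,…,N-1}`,
`∑_P (∏_{j=1}^{|P|-1} (α + j d)) ∏_{B ∈ P} ∏_{t=0}^{|B|-2} (1 - d + t)
  = ∏_{t=0}^{N-2} (α + 1 + t)`. -/
theorem pitman_yor_eppf_sums_to_one (α d : ℝ) (N : ℕ) (hN : 1 ≤ N) :
    ∑ P : Finpartition (univ : Finset (Fin N)),
        (∏ j ∈ range (P.parts.card - 1), (α + ((j : ℝ) + 1) * d)) *
          ∏ B ∈ P.parts, ∏ t ∈ range (B.card - 1), (1 - d + (t : ℝ)) =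
      ∏ t ∈ range (N - 1), (α + 1 + (t : ℝ)) := by
  haveI : Nonempty (Fin N) := ⟨⟨0, hN⟩⟩
  have := PYaux.key (γ := Fin N) α d univ univ_nonempty
  simpa [PYaux.w, card_univ] using this
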